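/- Let B=(V,E) be a Bratteli diagram with incidence matrices F_n and suppose the tail equivalence relation R on X_B is aperiodic. Define the cones C_n^∞ := ∩_{m ≥ n} F_n^T F_{n+1}^T ⋯ F_m^T (ℝ_+^{|V_{m+1}|}). (1) If μ is a finite Borel R-invariant measure on X_B, then the vectors p^{(n)} = (μ([ē_w]))_{w ∈ V_n}, where ē_w is any finite path from v_0 to w, satisfy p^{(n)} ∈ C_n^∞ and F_n^T p^{(n+1)} = p^{(n)} for all n ≥ 1. (2) Conversely, if a sequence of vectors p^{(n)} ∈ ℝ_+^{|V_n|} satisfies F_n^T p^{(n+1)} = p^{(n)} for all n ≥ 1, then there exists a non-atomic finite Borel R-invariant measure μ on X_B with μ([ē]) = p_w^{(n)} for every finite path ē from v_0 to w ∈ V_n. (3) Such a measure μ is a probability measure if and only if Σ_{w∈V_1} h_w^{(1)} p_w^{(1)} = 1, in which case Σ_{w∈V_n} h_w^{(n)} p_w^{(n)} = 1 for all n ≥ 1. -/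

import Mathlib

open MeasureTheory

/-- A Bratteli diagram `B = (V, E)`.  `V n` is the (finite, nonempty) set of vertices at
level `n`, with `V 0` a single point, and `E n` is the (finite, nonempty) set of edges
connecting level `n` to level `n + 1` (it corresponds to the edge set `E_{n+1}` of the
diagram).  Every vertex has an outgoing edge (`src_surj`) and every vertex of positive
level has an incoming edge (`rng_surj`). -/
structure BratteliDiagram where
  V : ℕ → Type
  E : ℕ → Type
  fintypeV : ∀ n, Fintype (V n)
  fintypeE : ∀ n, Fintype (E n)
  uniqueV0 : Unique (V 0)
  src : ∀ n, E n → V n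
  rng : ∀ n, E n → V (n + 1)
  src_surj : ∀ n, Function.Surjective (src n)
  rng_surj : ∀ n, Function.Surjective (rng n)

namespace BratteliDiagram

variable (B : BratteliDiagram)

instance (n : ℕ) : Fintype (B.V n) := B.fintypeV n
instance (n : ℕ) : Fintype (B.E n) := B.fintypeE n
instance (n : ℕ) : TopologicalSpace (B.E n) := ⊥
instance (n : ℕ) : DiscreteTopology (B.E n) := ⟨rfl⟩

/-- The path space `X_B` of the diagram: infinite sequences of edges, one at each level,
with matching range and source. -/
def Path : Type :=
  { x : ∀ n, B.E n // ∀ n, B.rng n (x n) = B.src (n + 1) (x (n + 1)) }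

instance : TopologicalSpace B.Path :=
  inferInstanceAs (TopologicalSpace
    { x : ∀ n, B.E n // ∀ n, B.rng n (x n) = B.src (n + 1) (x (n + 1)) })

noncomputable instance : MeasurableSpace B.Path := borel B.Path

instance : BorelSpace B.Path := ⟨rfl⟩

/-- The vertex at level `n` through which a path passes: the source of its `n`-th edge
(for `n = 0` this is the top vertex `v₀`). -/
def vertexAt (x : B.Path) (n : ℕ) : B.V n := B.src n (x.1 n)

/-- The cylinder set of all paths agreeing with `x` on the first `n` edges; this is the
clopen set determined by the finite initial path `(x_0, …, x_{n-1})`, which ends at the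
vertex `B.vertexAt x n`. -/
def cylinder (x : B.Path) (n : ℕ) : Set B.Path :=
  { y | ∀ k, k < n → y.1 k = x.1 k }

/-- The tail (cofinal) equivalence relation `R` on the path space. -/
def TailEquiv (x y : B.Path) : Prop := ∃ N, ∀ n, N ≤ n → x.1 n = y.1 n

/-- The tail equivalence relation is aperiodic: every equivalence class is infinite. -/
def Aperiodic : Prop := ∀ x : B.Path, { y | B.TailEquiv x y }.Infinite

/-- A (Borel) measure on the path space is `R`-invariant iff any two cylinder sets given
by finite initial paths ending at the same vertex have equal measure. -/
def IsRInvariant (μ : Measure B.Path) : Prop :=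
  ∀ (x y : B.Path) (n : ℕ), B.vertexAt x n = B.vertexAt y n →
    μ (B.cylinder x n) = μ (B.cylinder y n)

/-- The `n`-th incidence matrix: `incidence n v w` is the number of edges from the vertex
`w` at level `n` to the vertex `v` at level `n+1`. -/
noncomputable def incidence (n : ℕ) : Matrix (B.V (n + 1)) (B.V n) ℕ :=
  fun v w => Nat.card { e : B.E n // B.src n e = w ∧ B.rng n e = v }

/-- The height `h^{(n)}_w`: the number of finite paths from the top vertex to the vertex
`w` at level `n`. -/
noncomputable def height : (n : ℕ) → B.V n → ℕ
  | 0, _ => 1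
  | (n + 1), v => ∑ w : B.V n, B.incidence n v w * height n w

/-- The transpose `F_n^T` of the `n`-th incidence matrix applied (over `ℝ`) to a vector
indexed by the vertices of level `n + 1`. -/
noncomputable def transAction (n : ℕ) (p : B.V (n + 1) → ℝ) : B.V n → ℝ :=
  fun w => ∑ v : B.V (n + 1), (B.incidence n v w : ℝ) * p v

/-- The composition `F_n^T F_{n+1}^T ⋯ F_{n+k-1}^T` applied to a vector at level `n + k`. -/
noncomputable def push (n : ℕ) : (k : ℕ) → (B.V (n + k) → ℝ) → (B.V n → ℝ)
  | 0, q => q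
  | (k + 1), q => push n k (B.transAction (n + k) q)

/-- The cone `C_n^∞ = ⋂_{m ≥ n} F_n^T F_{n+1}^T ⋯ F_m^T (ℝ_+^{|V_{m+1}|})`. -/
def coneInf (n : ℕ) : Set (B.V n → ℝ) :=
  { q | ∀ k, 1 ≤ k → ∃ r : B.V (n + k) → ℝ, (∀ v, 0 ≤ r v) ∧ B.push n k r = q }

/-- The diagram is stationary: all the levels `(V_n, E_n)`, `n ≥ 1`, are identical. -/
def IsStationary : Prop :=
  ∃ (eV : ∀ n, B.V (n + 1) ≃ B.V (n + 2)) (eE : ∀ n, B.E (n + 1) ≃ B.E (n + 2)),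
    (∀ n e, B.src (n + 2) (eE n e) = eV n (B.src (n + 1) e)) ∧
    (∀ n e, B.rng (n + 2) (eE n e) = eV (n + 1) (B.rng (n + 1) e))

end BratteliDiagram

/-- An ordering `ω` on a Bratteli diagram: a linear order on each set `r⁻¹(v)` of edges
with a common range. -/
structure BOrder (B : BratteliDiagram) where
  le : ∀ n, B.E n → B.E n → Prop
  le_refl : ∀ n e, le n e e
  le_trans : ∀ n e f g, le n e f → le n f g → le n e g
  le_antisymm : ∀ n e f, le n e f → le n f e → e = f
  le_total : ∀ n e f, B.rng n e = B.rng n f → le n e f ∨ le n f e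

namespace BOrder

variable {B : BratteliDiagram} (ω : BOrder B)

/-- An edge is maximal if it is the largest element of `r⁻¹(r(e))`. -/
def maxEdge (n : ℕ) (e : B.E n) : Prop := ∀ f, B.rng n f = B.rng n e → ω.le n f e

/-- An edge is minimal if it is the smallest element of `r⁻¹(r(e))`. -/
def minEdge (n : ℕ) (e : B.E n) : Prop := ∀ f, B.rng n f = B.rng n e → ω.le n e f

/-- A maximal infinite path: all its edges are maximal. -/
def IsMaxPath (x : B.Path) : Prop := ∀ n, ω.maxEdge n (x.1 n)

/-- A minimal infinite path: all its edges are minimal. -/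
def IsMinPath (x : B.Path) : Prop := ∀ n, ω.minEdge n (x.1 n)

/-- `f` is the successor of `e` in the linearly ordered set `r⁻¹(r(e))`. -/
def isSucc (n : ℕ) (e f : B.E n) : Prop :=
  B.rng n f = B.rng n e ∧ ω.le n e f ∧ e ≠ f ∧
    ∀ g, B.rng n g = B.rng n e → ω.le n e g → g ≠ e → ω.le n f g

/-- The defining property of a Vershik map on the non-maximal paths: if `k` is the least
level at which the edge of `x` is not maximal, then `φ x` replaces that edge by its
successor, is minimal below level `k`, and agrees with `x` above level `k`. -/
def VershikSucc (φ : B.Path → B.Path) : Prop :=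
  ∀ (x : B.Path) (k : ℕ), ¬ ω.maxEdge k (x.1 k) → (∀ j, j < k → ω.maxEdge j (x.1 j)) →
    ω.isSucc k (x.1 k) ((φ x).1 k) ∧ (∀ j, j < k → ω.minEdge j ((φ x).1 j)) ∧
      ∀ j, k < j → (φ x).1 j = x.1 j

/-- `φ` is a Vershik map for the order `ω`: it maps the set of maximal paths onto the set
of minimal paths and sends every non-maximal path to its successor. -/
def IsVershikMap (φ : B.Path → B.Path) : Prop :=
  (φ '' { x | ω.IsMaxPath x } = { x | ω.IsMinPath x }) ∧ ω.VershikSucc φ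

end BOrder

open MeasureTheory Finset

section Pick
variable {α : Type} (s : Finset α) (g : α → ℝ) (idx : α → ℕ)

open Classical in
noncomputable def psum (a : α) : ℝ :=
  ∑ b ∈ s.filter (fun b => idx b < idx a), g b

open Classical in
noncomputable def psumN (k : ℕ) : ℝ :=
  ∑ b ∈ s.filter (fun b => idx b < k), g b

open Classical in
lemma psumN_mono (hg : ∀ a, 0 ≤ g a) {k m : ℕ} (hkm : k ≤ m) :
    psumN s g idx k ≤ psumN s g idx m := by
  unfold psumN
  refine Finset.sum_le_sum_of_subset_of_nonneg ?_ (fun i _ _ => hg i)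
  intro b hb
  rcases Finset.mem_filter.mp hb with ⟨h1, h2⟩
  exact Finset.mem_filter.mpr ⟨h1, lt_of_lt_of_le h2 hkm⟩

open Classical in
lemma pick_interval (hg : ∀ a, 0 ≤ g a) (hidx : Function.Injective idx)
    {t : ℝ} (h0 : 0 ≤ t) (ht : t < ∑ a ∈ s, g a) :
    ∃ a ∈ s, psum s g idx a ≤ t ∧ t < psum s g idx a + g a := by
  have hex : ∃ k, t < psumN s g idx k := by
    refine ⟨(s.sup idx) + 1, ?_⟩
    unfold psumN
    have h1 : s.filter (fun b => idx b < s.sup idx + 1) = s := by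
      apply Finset.filter_true_of_mem
      intro b hb; exact Nat.lt_succ_of_le (Finset.le_sup hb)
    rw [h1]; exact ht
  have hk0pos : Nat.find hex ≠ 0 := by
    intro h
    have h1 := Nat.find_spec hex
    rw [h] at h1
    have h2 : psumN s g idx 0 = 0 := by simp [psumN]
    linarith
  obtain ⟨m, hm⟩ : ∃ m, Nat.find hex = m + 1 :=
    ⟨Nat.find hex - 1, (Nat.succ_pred_eq_of_pos (Nat.pos_of_ne_zero hk0pos)).symm⟩
  have hSm : psumN s g idx m ≤ t := by
    have := Nat.find_min hex (by omega : m < Nat.find hex)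
    linarith [not_lt.mp this]
  have hSm1 : t < psumN s g idx (m + 1) := by
    have := Nat.find_spec hex; rwa [hm] at this
  have hexa : ∃ a ∈ s, idx a = m := by
    by_contra h
    push_neg at h
    have heq : s.filter (fun b => idx b < m + 1) = s.filter (fun b => idx b < m) := by
      apply Finset.filter_congr
      intro b hb
      constructor
      · intro hlt
        rcases Nat.lt_succ_iff_lt_or_eq.mp hlt with h' | h'
        · exact h'
        · exact absurd h' (h b hb)
      · omega
    unfold psumN at hSm1 hSm
    rw [heq] at hSm1; linarith
  obtain ⟨a, ha, hia⟩ := hexa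
  refine ⟨a, ha, ?_, ?_⟩
  · unfold psum; rw [hia]; exact hSm
  · have hins : s.filter (fun b => idx b < m + 1) = insert a (s.filter (fun b => idx b < m)) := by
      ext b
      simp only [Finset.mem_filter, Finset.mem_insert]
      constructor
      · rintro ⟨hb, hlt⟩
        rcases Nat.lt_succ_iff_lt_or_eq.mp hlt with h' | h'
        · exact Or.inr ⟨hb, h'⟩
        · exact Or.inl (hidx (h'.trans hia.symm))
      · rintro (rfl | ⟨hb, hlt⟩)
        · exact ⟨ha, by omega⟩
        · exact ⟨hb, by omega⟩
    have hnotmem : a ∉ s.filter (fun b => idx b < m) := by simp [hia]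
    have hval : psumN s g idx (m+1) = g a + psumN s g idx m := by
      unfold psumN; rw [hins, Finset.sum_insert hnotmem]
    unfold psum psumN at *; rw [hia]; linarith

open Classical in
lemma pick_unique_aux (hg : ∀ a, 0 ≤ g a)
    {t : ℝ} {a b : α} (ha : a ∈ s) (hb : b ∈ s) (hab : idx a < idx b)
    (h1 : t < psum s g idx a + g a) (h2 : psum s g idx b ≤ t) : False := by
  have hsub : insert a (s.filter (fun c => idx c < idx a)) ⊆
      s.filter (fun c => idx c < idx b) := by
    intro c hc
    rcases Finset.mem_insert.mp hc with rfl | hc'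
    · exact Finset.mem_filter.mpr ⟨ha, hab⟩
    · rcases Finset.mem_filter.mp hc' with ⟨hcs, hlt⟩
      exact Finset.mem_filter.mpr ⟨hcs, by omega⟩
  have hnot : a ∉ s.filter (fun c => idx c < idx a) := by simp
  have hle : psum s g idx a + g a ≤ psum s g idx b := by
    unfold psum
    calc (∑ c ∈ s.filter (fun c => idx c < idx a), g c) + g a
        = ∑ c ∈ insert a (s.filter (fun c => idx c < idx a)), g c := by
          rw [Finset.sum_insert hnot]; ring
      _ ≤ ∑ c ∈ s.filter (fun c => idx c < idx b), g c :=
          Finset.sum_le_sum_of_subset_of_nonneg hsub (fun i _ _ => hg i)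
  linarith

open Classical in
lemma pick_unique (hg : ∀ a, 0 ≤ g a) (hidx : Function.Injective idx)
    {t : ℝ} {a b : α} (ha : a ∈ s) (hb : b ∈ s)
    (h1 : psum s g idx a ≤ t) (h2 : t < psum s g idx a + g a)
    (h3 : psum s g idx b ≤ t) (h4 : t < psum s g idx b + g b) : a = b := by
  rcases lt_trichotomy (idx a) (idx b) with h | h | h
  · exact absurd (pick_unique_aux s g idx hg ha hb h h2 h3) (fun f => f.elim)
  · exact hidx h
  · exact absurd (pick_unique_aux s g idx hg hb ha h h4 h1) (fun f => f.elim)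

open Classical in
lemma psum_nonneg {α : Type} (s : Finset α) (g : α → ℝ) (idx : α → ℕ)
    (hg : ∀ a, 0 ≤ g a) (a : α) : 0 ≤ psum s g idx a :=
  Finset.sum_nonneg (fun b _ => hg b)

open Classical in
lemma psum_add_le {α : Type} (s : Finset α) (g : α → ℝ) (idx : α → ℕ)
    (hg : ∀ a, 0 ≤ g a) {a : α} (ha : a ∈ s) :
    psum s g idx a + g a ≤ ∑ b ∈ s, g b := by
  have hnot : a ∉ s.filter (fun c => idx c < idx a) := by simp
  have hsub : insert a (s.filter (fun c => idx c < idx a)) ⊆ s := by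
    intro c hc
    rcases Finset.mem_insert.mp hc with rfl | hc'
    · exact ha
    · exact Finset.filter_subset _ _ hc'
  unfold psum
  calc (∑ c ∈ s.filter (fun c => idx c < idx a), g c) + g a
      = ∑ c ∈ insert a (s.filter (fun c => idx c < idx a)), g c := by
        rw [Finset.sum_insert hnot]; ring
    _ ≤ ∑ c ∈ s, g c :=
        Finset.sum_le_sum_of_subset_of_nonneg hsub (fun i _ _ => hg i)
end Pick

namespace BratteliDiagram
section Aux
variable (B : BratteliDiagram)

instance (n : ℕ) : MeasurableSpace (B.E n) := ⊤
instance (n : ℕ) : MeasurableSingletonClass (B.E n) := ⟨fun _ => trivial⟩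

open Classical Finset in
lemma transAction_eq_sum (n : ℕ) (r : B.V (n+1) → ℝ) (v : B.V n) :
    B.transAction n r v
      = ∑ e ∈ univ.filter (fun e => B.src n e = v), r (B.rng n e) := by
  classical
  simp only [transAction]
  rw [← Finset.sum_fiberwise (univ.filter (fun e => B.src n e = v)) (B.rng n)
    (fun e => r (B.rng n e))]
  apply Finset.sum_congr rfl
  intro w _
  rw [Finset.filter_filter]
  have hcard : B.incidence n w v
      = (univ.filter (fun e => B.src n e = v ∧ B.rng n e = w)).card := by
    simp only [incidence]
    rw [Nat.card_eq_fintype_card, Fintype.card_subtype]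
  have hterm : ∀ e ∈ univ.filter (fun e => B.src n e = v ∧ B.rng n e = w),
      r (B.rng n e) = r w := by
    intro e he
    rcases Finset.mem_filter.mp he with ⟨_, _, h2⟩
    rw [h2]
  rw [Finset.sum_congr rfl hterm, Finset.sum_const, nsmul_eq_mul, hcard]

noncomputable def chainE : (m : ℕ) → B.E m
  | 0 => (B.src_surj 0 B.uniqueV0.default).choose
  | (m+1) => (B.src_surj (m+1) (B.rng m (chainE m))).choose

lemma chainE_src (m : ℕ) : B.src (m+1) (B.chainE (m+1)) = B.rng m (B.chainE m) :=
  (B.src_surj (m+1) _).choose_spec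

noncomputable def basePath : B.Path :=
  ⟨fun m => B.chainE m, fun m => (B.chainE_src m).symm⟩

open Classical in
noncomputable def contE (n : ℕ) (e : B.E n) : (m : ℕ) → B.E m
  | 0 => if h : 0 = n then cast (congrArg B.E h.symm) e else B.chainE 0
  | (m+1) => if h : m+1 = n then cast (congrArg B.E h.symm) e
             else (B.src_surj (m+1) (B.rng m (contE n e m))).choose

lemma contE_at (n : ℕ) (e : B.E n) : B.contE n e n = e := by
  cases n with
  | zero => simp [contE]
  | succ m => simp [contE]

open Classical in
lemma contE_src (n : ℕ) (e : B.E n) (m : ℕ) (h : m+1 ≠ n) :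
    B.src (m+1) (B.contE n e (m+1)) = B.rng m (B.contE n e m) := by
  have heq : B.contE n e (m+1) = (B.src_surj (m+1) (B.rng m (B.contE n e m))).choose := by
    conv_lhs => rw [contE]
    rw [dif_neg h]
  rw [heq]
  exact (B.src_surj (m+1) _).choose_spec

lemma exists_path_ext (n : ℕ) (e : B.E n) (u : B.Path) (hu : B.vertexAt u n = B.src n e) :
    ∃ z : B.Path, (∀ k, k < n → z.1 k = u.1 k) ∧ z.1 n = e := by
  classical
  refine ⟨⟨fun m => if m < n then u.1 m else B.contE n e m, ?_⟩, ?_, ?_⟩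
  · intro m
    rcases lt_trichotomy (m+1) n with hlt | heq | hgt
    · have hm : m < n := by omega
      simp only [if_pos hm, if_pos hlt]
      exact u.2 m
    · subst heq
      have hm : m < m+1 := Nat.lt_succ_self m
      simp only [if_pos hm, lt_irrefl, if_neg (lt_irrefl (m+1)), B.contE_at]
      have h1 := u.2 m
      rw [h1]
      exact hu
    · have hm : ¬ m < n := by omega
      have hm1 : ¬ m+1 < n := by omega
      simp only [if_neg hm, if_neg hm1]
      exact (B.contE_src n e m (by omega)).symm
  · intro k hk
    simp only [if_pos hk]
  · simp [B.contE_at]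

lemma exists_path_through (n : ℕ) (v : B.V n) : ∃ x : B.Path, B.vertexAt x n = v := by
  induction n with
  | zero =>
    haveI := B.uniqueV0
    exact ⟨B.basePath, Subsingleton.elim _ _⟩
  | succ m ih =>
    obtain ⟨e, he⟩ := B.rng_surj m v
    obtain ⟨u, hu⟩ := ih (B.src m e)
    obtain ⟨z, _, hz2⟩ := B.exists_path_ext m e u (by rw [hu])
    refine ⟨z, ?_⟩
    show B.src (m+1) (z.1 (m+1)) = v
    rw [← z.2 m, hz2, he]

lemma cylinder_antitone {x : B.Path} {m n : ℕ} (h : m ≤ n) :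
    B.cylinder x n ⊆ B.cylinder x m :=
  fun _ hy k hk => hy k (lt_of_lt_of_le hk h)

lemma mem_cylinder_self (x : B.Path) (n : ℕ) : x ∈ B.cylinder x n := fun _ _ => rfl

lemma cylinder_zero (x : B.Path) : B.cylinder x 0 = Set.univ := by
  ext y
  simp only [cylinder, Set.mem_setOf_eq, Set.mem_univ, iff_true]
  intro k hk
  omega

lemma vertexAt_eq_of_mem {x y : B.Path} {n : ℕ} (hy : y ∈ B.cylinder x n) :
    B.vertexAt y n = B.vertexAt x n := by
  cases n with
  | zero =>
    haveI := B.uniqueV0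
    exact Subsingleton.elim _ _
  | succ m =>
    show B.src (m+1) (y.1 (m+1)) = B.src (m+1) (x.1 (m+1))
    rw [← y.2 m, ← x.2 m, hy m (Nat.lt_succ_self m)]

lemma isOpen_coord (n : ℕ) (e : B.E n) : IsOpen {y : B.Path | y.1 n = e} := by
  have hc : Continuous (fun y : B.Path => y.1 n) :=
    (continuous_apply n).comp continuous_subtype_val
  have := (isOpen_discrete ({e} : Set (B.E n))).preimage hc
  exact this

lemma measurableSet_cylinder (x : B.Path) (n : ℕ) : MeasurableSet (B.cylinder x n) := by
  have heq : B.cylinder x n = ⋂ k ∈ Finset.range n, {y : B.Path | y.1 k = x.1 k} := by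
    ext y
    simp only [cylinder, Set.mem_setOf_eq, Set.mem_iInter, Finset.mem_range]
  rw [heq]
  exact MeasurableSet.biInter (Set.to_countable _)
    (fun k _ => (B.isOpen_coord k (x.1 k)).measurableSet)

lemma singleton_eq_iInter (x : B.Path) : ({x} : Set B.Path) = ⋂ n, B.cylinder x n := by
  ext y
  simp only [Set.mem_singleton_iff, Set.mem_iInter]
  constructor
  · rintro rfl n
    exact B.mem_cylinder_self y n
  · intro h
    apply Subtype.ext
    funext k
    exact h (k+1) k (Nat.lt_succ_self k)

lemma measurableSet_singleton_path (x : B.Path) : MeasurableSet ({x} : Set B.Path) := by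
  rw [B.singleton_eq_iInter x]
  exact MeasurableSet.iInter (fun n => B.measurableSet_cylinder x n)

open Classical Finset in
lemma measure_cylinder_decomp (μ : Measure B.Path) [IsFiniteMeasure μ] (x : B.Path) (n : ℕ)
    (p1 : B.V (n+1) → ℝ)
    (hp1 : ∀ y : B.Path, p1 (B.vertexAt y (n+1)) = (μ (B.cylinder y (n+1))).toReal) :
    (μ (B.cylinder x n)).toReal
      = ∑ e ∈ univ.filter (fun e => B.src n e = B.vertexAt x n), p1 (B.rng n e) := by
  classical
  set v := B.vertexAt x n with hv
  have hdec : B.cylinder x n = ⋃ e ∈ univ.filter (fun e => B.src n e = v),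
      (B.cylinder x n ∩ {y : B.Path | y.1 n = e}) := by
    ext y
    simp only [Set.mem_iUnion, mem_filter, mem_univ, true_and, Set.mem_inter_iff,
      Set.mem_setOf_eq]
    constructor
    · intro hy
      exact ⟨y.1 n, B.vertexAt_eq_of_mem hy, hy, rfl⟩
    · rintro ⟨e, _, hy, _⟩
      exact hy
  have hmeas : ∀ e : B.E n, MeasurableSet (B.cylinder x n ∩ {y : B.Path | y.1 n = e}) :=
    fun e => (B.measurableSet_cylinder x n).inter (B.isOpen_coord n e).measurableSet
  have hdisj : (↑(univ.filter (fun e => B.src n e = v)) : Set (B.E n)).PairwiseDisjoint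
      (fun e => B.cylinder x n ∩ {y : B.Path | y.1 n = e}) := by
    intro a _ b _ hab
    apply Set.disjoint_left.mpr
    rintro y ⟨_, hy1⟩ ⟨_, hy2⟩
    exact hab (by rw [← hy1, ← hy2])
  have hsum : μ (B.cylinder x n) = ∑ e ∈ univ.filter (fun e => B.src n e = v),
      μ (B.cylinder x n ∩ {y : B.Path | y.1 n = e}) := by
    conv_lhs => rw [hdec]
    exact measure_biUnion_finset hdisj (fun e _ => hmeas e)
  have hpiece : ∀ e ∈ univ.filter (fun e => B.src n e = v),
      (μ (B.cylinder x n ∩ {y : B.Path | y.1 n = e})).toReal = p1 (B.rng n e) := by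
    intro e he
    have hse : B.src n e = v := (mem_filter.mp he).2
    obtain ⟨z, hz1, hz2⟩ := B.exists_path_ext n e x hse.symm
    have hset : B.cylinder x n ∩ {y : B.Path | y.1 n = e} = B.cylinder z (n+1) := by
      ext y
      simp only [Set.mem_inter_iff, Set.mem_setOf_eq]
      constructor
      · rintro ⟨hy, hyn⟩ k hk
        rcases Nat.lt_succ_iff_lt_or_eq.mp hk with h | h
        · rw [hy k h, ← hz1 k h]
        · subst h
          rw [hyn, hz2]
      · intro hy
        refine ⟨fun k hk => ?_, ?_⟩
        · rw [hy k (Nat.lt_succ_of_lt hk), hz1 k hk]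
        · rw [hy n (Nat.lt_succ_self n), hz2]
    rw [hset, ← hp1 z]
    congr 1
    show B.src (n+1) (z.1 (n+1)) = B.rng n e
    rw [← z.2 n, hz2]
  rw [hsum, ENNReal.toReal_sum (fun e _ => measure_ne_top μ _)]
  exact Finset.sum_congr rfl hpiece

open Classical Finset in
lemma key_rec (μ : Measure B.Path) [IsFiniteMeasure μ]
    (p : (n : ℕ) → B.V n → ℝ)
    (hp : ∀ (n : ℕ) (x : B.Path), p n (B.vertexAt x n) = (μ (B.cylinder x n)).toReal) :
    ∀ n v, p n v = ∑ e ∈ univ.filter (fun e => B.src n e = v), p (n+1) (B.rng n e) := by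
  intro n v
  obtain ⟨x, hx⟩ := B.exists_path_through n v
  rw [← hx, hp n x, B.measure_cylinder_decomp μ x n (p (n+1)) (fun y => hp (n+1) y)]

lemma key_rec' (μ : Measure B.Path) [IsFiniteMeasure μ]
    (p : (n : ℕ) → B.V n → ℝ)
    (hp : ∀ (n : ℕ) (x : B.Path), p n (B.vertexAt x n) = (μ (B.cylinder x n)).toReal)
    (n : ℕ) : B.transAction n (p (n+1)) = p n := by
  funext v
  rw [B.transAction_eq_sum n (p (n+1)) v]
  exact (B.key_rec μ p hp n v).symm

lemma p_nonneg (μ : Measure B.Path)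
    (p : (n : ℕ) → B.V n → ℝ)
    (hp : ∀ (n : ℕ) (x : B.Path), p n (B.vertexAt x n) = (μ (B.cylinder x n)).toReal) :
    ∀ n w, 0 ≤ p n w := by
  intro n w
  obtain ⟨x, hx⟩ := B.exists_path_through n w
  rw [← hx, hp n x]
  exact ENNReal.toReal_nonneg

lemma push_eq (p : (n : ℕ) → B.V n → ℝ)
    (hrec : ∀ n, B.transAction n (p (n+1)) = p n) (n : ℕ) :
    ∀ k, B.push n k (p (n+k)) = p n := by
  intro k
  induction k with
  | zero => rfl
  | succ k ih =>
    show B.push n k (B.transAction (n+k) (p (n+k+1))) = p n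
    rw [hrec (n+k)]
    exact ih

lemma mass_eq (μ : Measure B.Path) [IsFiniteMeasure μ]
    (p : (n : ℕ) → B.V n → ℝ)
    (hp : ∀ (n : ℕ) (x : B.Path), p n (B.vertexAt x n) = (μ (B.cylinder x n)).toReal) :
    ∀ n, ∑ w : B.V n, (B.height n w : ℝ) * p n w = (μ Set.univ).toReal := by
  intro n
  induction n with
  | zero =>
    haveI := B.uniqueV0
    rw [Finset.univ_unique, Finset.sum_singleton]
    have h1 : B.height 0 (default : B.V 0) = 1 := rfl
    have h2 := hp 0 B.basePath
    rw [B.cylinder_zero] at h2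
    have h3 : (default : B.V 0) = B.vertexAt B.basePath 0 := Subsingleton.elim _ _
    rw [h1, h3, h2]
    simp
  | succ n ih =>
    have htr : B.transAction n (p (n+1)) = p n := B.key_rec' μ p hp n
    have hterm : ∀ w, p n w = ∑ v : B.V (n+1), (B.incidence n v w : ℝ) * p (n+1) v := by
      intro w
      rw [← htr]
      rfl
    rw [← ih]
    calc ∑ v : B.V (n+1), (B.height (n+1) v : ℝ) * p (n+1) v
        = ∑ v : B.V (n+1), ∑ w : B.V n,
            ((B.incidence n v w : ℝ) * (B.height n w : ℝ)) * p (n+1) v := by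
          apply Finset.sum_congr rfl
          intro v _
          have hh : B.height (n+1) v = ∑ w : B.V n, B.incidence n v w * B.height n w := rfl
          rw [hh]
          push_cast
          rw [Finset.sum_mul]
      _ = ∑ w : B.V n, (B.height n w : ℝ)
            * ∑ v : B.V (n+1), (B.incidence n v w : ℝ) * p (n+1) v := by
          rw [Finset.sum_comm]
          apply Finset.sum_congr rfl
          intro w _
          rw [Finset.mul_sum]
          apply Finset.sum_congr rfl
          intro v _
          ring
      _ = ∑ w : B.V n, (B.height n w : ℝ) * p n w := by
          apply Finset.sum_congr rfl
          intro w _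
          rw [← hterm w]

end Aux
end BratteliDiagram

namespace BratteliDiagram
section Construct
open Finset
variable (B : BratteliDiagram)

noncomputable def eidx (n : ℕ) : B.E n → ℕ := fun e => (Fintype.equivFin (B.E n) e : ℕ)

lemma eidx_inj (n : ℕ) : Function.Injective (B.eidx n) := by
  intro a b h
  exact (Fintype.equivFin (B.E n)).injective (Fin.val_injective h)

variable (q : (n : ℕ) → B.V n → ℝ)

open Classical in
noncomputable def cumQ (n : ℕ) (e : B.E n) : ℝ :=
  psum (univ.filter (fun f => B.src n f = B.src n e))
    (fun f => q (n+1) (B.rng n f)) (B.eidx n) e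

lemma cumQ_nonneg (hq : ∀ n w, 0 ≤ q n w) (n : ℕ) (e : B.E n) : 0 ≤ B.cumQ q n e :=
  psum_nonneg _ _ _ (fun f => hq (n+1) (B.rng n f)) e

open Classical in
lemma cumQ_eq {n : ℕ} {e : B.E n} {v : B.V n} (hse : B.src n e = v) :
    B.cumQ q n e = psum (univ.filter (fun f => B.src n f = v))
      (fun f => q (n+1) (B.rng n f)) (B.eidx n) e := by
  unfold cumQ
  rw [hse]

open Classical in
lemma cumQ_add_le (hq : ∀ n w, 0 ≤ q n w)
    (hrec : ∀ n v, q n v = ∑ e ∈ univ.filter (fun e => B.src n e = v), q (n+1) (B.rng n e))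
    (n : ℕ) (e : B.E n) :
    B.cumQ q n e + q (n+1) (B.rng n e) ≤ q n (B.src n e) := by
  rw [hrec n (B.src n e)]
  exact psum_add_le _ _ _ (fun f => hq (n+1) (B.rng n f))
    (Finset.mem_filter.mpr ⟨Finset.mem_univ e, rfl⟩)

open Classical in
noncomputable def pickE (n : ℕ) (v : B.V n) (t : ℝ) : B.E n :=
  if h : ∃ e, B.src n e = v ∧ B.cumQ q n e ≤ t ∧ t < B.cumQ q n e + q (n+1) (B.rng n e)
  then h.choose
  else (B.src_surj n v).choose

open Classical in
lemma pickE_src (n : ℕ) (v : B.V n) (t : ℝ) : B.src n (B.pickE q n v t) = v := by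
  unfold pickE
  split
  next h => exact h.choose_spec.1
  next h => exact (B.src_surj n v).choose_spec

open Classical in
lemma pickE_spec {n : ℕ} {v : B.V n} {t : ℝ}
    (h : ∃ e, B.src n e = v ∧ B.cumQ q n e ≤ t ∧ t < B.cumQ q n e + q (n+1) (B.rng n e)) :
    B.src n (B.pickE q n v t) = v ∧ B.cumQ q n (B.pickE q n v t) ≤ t ∧
      t < B.cumQ q n (B.pickE q n v t) + q (n+1) (B.rng n (B.pickE q n v t)) := by
  unfold pickE
  rw [dif_pos h]
  exact h.choose_spec

open Classical in
lemma pickE_exists (hq : ∀ n w, 0 ≤ q n w)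
    (hrec : ∀ n v, q n v = ∑ e ∈ univ.filter (fun e => B.src n e = v), q (n+1) (B.rng n e))
    (n : ℕ) (v : B.V n) {t : ℝ} (h0 : 0 ≤ t) (ht : t < q n v) :
    ∃ e, B.src n e = v ∧ B.cumQ q n e ≤ t ∧ t < B.cumQ q n e + q (n+1) (B.rng n e) := by
  rw [hrec n v] at ht
  obtain ⟨a, ha, h1, h2⟩ := pick_interval (univ.filter (fun f => B.src n f = v))
    (fun f => q (n+1) (B.rng n f)) (B.eidx n) (fun f => hq (n+1) (B.rng n f))
    (B.eidx_inj n) h0 ht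
  have hsa : B.src n a = v := (Finset.mem_filter.mp ha).2
  refine ⟨a, hsa, ?_, ?_⟩
  · rw [B.cumQ_eq q hsa]; exact h1
  · rw [B.cumQ_eq q hsa]; exact h2

open Classical in
lemma pickE_unique (hq : ∀ n w, 0 ≤ q n w)
    {n : ℕ} {v : B.V n} {t : ℝ} {e : B.E n} (hse : B.src n e = v)
    (h1 : B.cumQ q n e ≤ t) (h2 : t < B.cumQ q n e + q (n+1) (B.rng n e)) :
    B.pickE q n v t = e := by
  have hex : ∃ e, B.src n e = v ∧ B.cumQ q n e ≤ t ∧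
      t < B.cumQ q n e + q (n+1) (B.rng n e) := ⟨e, hse, h1, h2⟩
  obtain ⟨hs, hc1, hc2⟩ := B.pickE_spec q hex
  refine pick_unique (t := t) (univ.filter (fun f => B.src n f = v))
    (fun f => q (n+1) (B.rng n f)) (B.eidx n) (fun f => hq (n+1) (B.rng n f))
    (B.eidx_inj n) (Finset.mem_filter.mpr ⟨Finset.mem_univ _, hs⟩)
    (Finset.mem_filter.mpr ⟨Finset.mem_univ _, hse⟩) ?_ ?_ ?_ ?_
  · rw [← B.cumQ_eq q hs]; exact hc1
  · rw [← B.cumQ_eq q hs]; exact hc2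
  · rw [← B.cumQ_eq q hse]; exact h1
  · rw [← B.cumQ_eq q hse]; exact h2

noncomputable def stepF : (n : ℕ) → ℝ → B.E n × ℝ
  | 0, t =>
      (B.pickE q 0 B.uniqueV0.default t,
       t - B.cumQ q 0 (B.pickE q 0 B.uniqueV0.default t))
  | (n+1), t =>
      (B.pickE q (n+1) (B.rng n (stepF n t).1) (stepF n t).2,
       (stepF n t).2 - B.cumQ q (n+1) (B.pickE q (n+1) (B.rng n (stepF n t).1) (stepF n t).2))

noncomputable def ofs : ℕ → ℝ → ℝ
  | 0, t => t
  | (n+1), t => (B.stepF q n t).2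

noncomputable def vtxF : (n : ℕ) → ℝ → B.V n
  | 0, _ => B.uniqueV0.default
  | (n+1), t => B.rng n (B.stepF q n t).1

lemma stepF_fst (n : ℕ) (t : ℝ) :
    (B.stepF q n t).1 = B.pickE q n (B.vtxF q n t) (B.ofs q n t) := by
  cases n <;> rfl

lemma stepF_snd (n : ℕ) (t : ℝ) :
    (B.stepF q n t).2 = B.ofs q n t - B.cumQ q n ((B.stepF q n t).1) := by
  cases n with
  | zero => rfl
  | succ m =>
    show (B.stepF q m t).2 - _ = (B.stepF q m t).2 - _
    rfl

lemma stepF_src (n : ℕ) (t : ℝ) : B.src n (B.stepF q n t).1 = B.vtxF q n t := by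
  rw [B.stepF_fst q n t]
  exact B.pickE_src q n _ _

noncomputable def pathOf (t : ℝ) : B.Path :=
  ⟨fun n => (B.stepF q n t).1, fun n => by
    rw [B.stepF_src q (n+1) t]
    rfl⟩

noncomputable def lep : ℕ → B.Path → ℝ
  | 0, _ => 0
  | (n+1), x => lep n x + B.cumQ q n (x.1 n)

lemma lep_succ (n : ℕ) (x : B.Path) :
    B.lep q (n+1) x = B.lep q n x + B.cumQ q n (x.1 n) := rfl

lemma vertexAt_succ (x : B.Path) (n : ℕ) :
    B.vertexAt x (n+1) = B.rng n (x.1 n) := (x.2 n).symm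

lemma vertexAt_eq_src (x : B.Path) (n : ℕ) :
    B.vertexAt x n = B.src n (x.1 n) := rfl

end Construct
end BratteliDiagram

namespace BratteliDiagram
section MainInd
open Finset
variable (B : BratteliDiagram) (q : (n : ℕ) → B.V n → ℝ)

open Classical in
lemma lep_bounds (hq : ∀ n w, 0 ≤ q n w)
    (hrec : ∀ n v, q n v = ∑ e ∈ univ.filter (fun e => B.src n e = v), q (n+1) (B.rng n e))
    (x : B.Path) :
    ∀ n, 0 ≤ B.lep q n x ∧
      B.lep q n x + q n (B.vertexAt x n) ≤ q 0 B.uniqueV0.default := by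
  intro n
  induction n with
  | zero =>
    haveI := B.uniqueV0
    constructor
    · exact le_refl 0
    · have : B.vertexAt x 0 = B.uniqueV0.default := Subsingleton.elim _ _
      rw [this]
      show 0 + q 0 B.uniqueV0.default ≤ q 0 B.uniqueV0.default
      linarith
  | succ n ih =>
    obtain ⟨h1, h2⟩ := ih
    have hc0 : 0 ≤ B.cumQ q n (x.1 n) := B.cumQ_nonneg q hq n (x.1 n)
    have hca : B.cumQ q n (x.1 n) + q (n+1) (B.rng n (x.1 n)) ≤ q n (B.src n (x.1 n)) :=
      B.cumQ_add_le q hq hrec n (x.1 n)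
    rw [B.lep_succ q n x]
    constructor
    · linarith
    · rw [B.vertexAt_succ x n]
      have : q n (B.src n (x.1 n)) = q n (B.vertexAt x n) := rfl
      linarith [this ▸ hca]

open Classical in
lemma main_ind (hq : ∀ n w, 0 ≤ q n w)
    (hrec : ∀ n v, q n v = ∑ e ∈ univ.filter (fun e => B.src n e = v), q (n+1) (B.rng n e))
    (x : B.Path) :
    ∀ n, ∀ t : ℝ, 0 ≤ t → t < q 0 B.uniqueV0.default →
    (((∀ k, k < n → (B.stepF q k t).1 = x.1 k) ↔
       (B.lep q n x ≤ t ∧ t < B.lep q n x + q n (B.vertexAt x n))) ∧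
     ((∀ k, k < n → (B.stepF q k t).1 = x.1 k) →
       (B.ofs q n t = t - B.lep q n x ∧ B.vtxF q n t = B.vertexAt x n))) := by
  intro n
  induction n with
  | zero =>
    intro t h0 hM
    haveI := B.uniqueV0
    have hvq : q 0 (B.vertexAt x 0) = q 0 B.uniqueV0.default := by
      congr 1
      exact Subsingleton.elim _ _
    constructor
    · constructor
      · intro _
        refine ⟨by show (0:ℝ) ≤ t; exact h0, ?_⟩
        show t < 0 + q 0 (B.vertexAt x 0)
        rw [hvq]
        linarith
      · intro _ k hk
        omega
    · intro _
      constructor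
      · show t = t - 0
        ring
      · exact Subsingleton.elim _ _
  | succ n ih =>
    intro t h0 hM
    obtain ⟨ihiff, ihdata⟩ := ih t h0 hM
    have hv1 : B.vertexAt x (n+1) = B.rng n (x.1 n) := B.vertexAt_succ x n
    have hcadd : B.cumQ q n (x.1 n) + q (n+1) (B.rng n (x.1 n)) ≤ q n (B.vertexAt x n) :=
      B.cumQ_add_le q hq hrec n (x.1 n)
    have hc0 : 0 ≤ B.cumQ q n (x.1 n) := B.cumQ_nonneg q hq n (x.1 n)
    have hdata : (∀ k, k < n+1 → (B.stepF q k t).1 = x.1 k) →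
        (B.ofs q (n+1) t = t - B.lep q (n+1) x ∧ B.vtxF q (n+1) t = B.vertexAt x (n+1)) := by
      intro hall
      have hn : ∀ k, k < n → (B.stepF q k t).1 = x.1 k := fun k hk => hall k (by omega)
      obtain ⟨hofs, hvtx⟩ := ihdata hn
      have hedge : (B.stepF q n t).1 = x.1 n := hall n (by omega)
      constructor
      · show (B.stepF q n t).2 = t - B.lep q (n+1) x
        rw [B.stepF_snd q n t, hedge, hofs, B.lep_succ q n x]
        ring
      · show B.rng n (B.stepF q n t).1 = B.vertexAt x (n+1)
        rw [hedge, hv1]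
    refine ⟨⟨?_, ?_⟩, hdata⟩
    · intro hall
      have hn : ∀ k, k < n → (B.stepF q k t).1 = x.1 k := fun k hk => hall k (by omega)
      obtain ⟨hofs, hvtx⟩ := ihdata hn
      obtain ⟨hl, hr⟩ := ihiff.mp hn
      have hedge : (B.stepF q n t).1 = x.1 n := hall n (by omega)
      have ho1 : 0 ≤ B.ofs q n t := by rw [hofs]; linarith
      have ho2 : B.ofs q n t < q n (B.vertexAt x n) := by rw [hofs]; linarith
      have hex := B.pickE_exists q hq hrec n (B.vertexAt x n) ho1 ho2
      have hspec := B.pickE_spec q hex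
      rw [B.stepF_fst q n t, hvtx] at hedge
      rw [hedge] at hspec
      obtain ⟨_, hc1, hc2⟩ := hspec
      rw [hofs] at hc1 hc2
      constructor
      · show B.lep q n x + B.cumQ q n (x.1 n) ≤ t
        linarith
      · show t < (B.lep q n x + B.cumQ q n (x.1 n)) + q (n+1) (B.vertexAt x (n+1))
        rw [hv1]
        linarith
    · rintro ⟨hl, hr⟩
      rw [B.lep_succ q n x] at hl hr
      rw [hv1] at hr
      have hl' : B.lep q n x ≤ t := by linarith
      have hr' : t < B.lep q n x + q n (B.vertexAt x n) := by linarith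
      have hn := ihiff.mpr ⟨hl', hr'⟩
      obtain ⟨hofs, hvtx⟩ := ihdata hn
      have hedge : (B.stepF q n t).1 = x.1 n := by
        rw [B.stepF_fst q n t, hvtx]
        apply B.pickE_unique q hq (B.vertexAt_eq_src x n).symm
        · rw [hofs]; linarith
        · rw [hofs]; linarith
      intro k hk
      rcases Nat.lt_succ_iff_lt_or_eq.mp hk with h | h
      · exact hn k h
      · subst h; exact hedge

open Classical in
lemma preimage_cylinder (hq : ∀ n w, 0 ≤ q n w)
    (hrec : ∀ n v, q n v = ∑ e ∈ univ.filter (fun e => B.src n e = v), q (n+1) (B.rng n e))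
    (x : B.Path) (n : ℕ) :
    (B.pathOf q) ⁻¹' (B.cylinder x n) ∩ Set.Ico 0 (q 0 B.uniqueV0.default)
      = Set.Ico (B.lep q n x) (B.lep q n x + q n (B.vertexAt x n)) := by
  ext t
  simp only [Set.mem_inter_iff, Set.mem_preimage, Set.mem_Ico]
  constructor
  · rintro ⟨hcyl, h0, hM⟩
    exact ((B.main_ind q hq hrec x n t h0 hM).1).mp hcyl
  · rintro ⟨hl, hr⟩
    obtain ⟨hb1, hb2⟩ := B.lep_bounds q hq hrec x n
    have h0 : (0:ℝ) ≤ t := le_trans hb1 hl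
    have hM : t < q 0 B.uniqueV0.default := lt_of_lt_of_le hr hb2
    exact ⟨((B.main_ind q hq hrec x n t h0 hM).1).mpr ⟨hl, hr⟩, h0, hM⟩

end MainInd
end BratteliDiagram

namespace BratteliDiagram
section Meas
open Finset
variable (B : BratteliDiagram) (q : (n : ℕ) → B.V n → ℝ)

instance (n : ℕ) : BorelSpace (B.E n) := ⟨borel_eq_top_of_discrete.symm⟩

open Classical in
lemma measurable_pickE (hq : ∀ n w, 0 ≤ q n w) (n : ℕ) (v : B.V n) :
    Measurable (B.pickE q n v) := by
  apply measurable_to_countable'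
  intro e
  classical
  set Q : B.E n → Set ℝ := fun f => {t | B.src n f = v ∧ B.cumQ q n f ≤ t ∧
      t < B.cumQ q n f + q (n+1) (B.rng n f)} with hQ
  have hQmeas : ∀ f, MeasurableSet (Q f) := by
    intro f
    by_cases hsf : B.src n f = v
    · have : Q f = Set.Ico (B.cumQ q n f) (B.cumQ q n f + q (n+1) (B.rng n f)) := by
        ext t; simp [hQ, hsf, Set.mem_Ico]
      rw [this]; exact measurableSet_Ico
    · have : Q f = ∅ := by
        ext t; simp [hQ, hsf]
      rw [this]; exact MeasurableSet.empty
  set N : Set ℝ := (⋃ f, Q f)ᶜ with hN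
  have hNmeas : MeasurableSet N := (MeasurableSet.iUnion (fun f => hQmeas f)).compl
  have hset : (B.pickE q n v) ⁻¹' {e}
      = Q e ∪ (N ∩ (if (B.src_surj n v).choose = e then Set.univ else ∅)) := by
    ext t
    simp only [Set.mem_preimage, Set.mem_singleton_iff, Set.mem_union, Set.mem_inter_iff]
    constructor
    · intro hpe
      by_cases hex : ∃ f, B.src n f = v ∧ B.cumQ q n f ≤ t ∧
          t < B.cumQ q n f + q (n+1) (B.rng n f)
      · left
        obtain ⟨h1, h2, h3⟩ := B.pickE_spec q hex
        rw [hpe] at h1 h2 h3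
        exact ⟨h1, h2, h3⟩
      · right
        constructor
        · rw [hN]
          simp only [Set.mem_compl_iff, Set.mem_iUnion, not_exists]
          intro f hf
          exact hex ⟨f, hf.1, hf.2.1, hf.2.2⟩
        · have : B.pickE q n v t = (B.src_surj n v).choose := by
            unfold pickE
            rw [dif_neg hex]
          rw [this] at hpe
          rw [if_pos hpe]
          trivial
    · rintro (hqe | ⟨hn, hfb⟩)
      · exact B.pickE_unique q hq hqe.1 hqe.2.1 hqe.2.2
      · by_cases hc : (B.src_surj n v).choose = e
        · have hnex : ¬ ∃ f, B.src n f = v ∧ B.cumQ q n f ≤ t ∧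
              t < B.cumQ q n f + q (n+1) (B.rng n f) := by
            rw [hN] at hn
            simp only [Set.mem_compl_iff, Set.mem_iUnion, not_exists] at hn
            rintro ⟨f, h1, h2, h3⟩
            exact hn f ⟨h1, h2, h3⟩
          have : B.pickE q n v t = (B.src_surj n v).choose := by
            unfold pickE
            rw [dif_neg hnex]
          rw [this, hc]
        · rw [if_neg hc] at hfb
          exact hfb.elim
  rw [hset]
  refine (hQmeas e).union (hNmeas.inter ?_)
  by_cases hc : (B.src_surj n v).choose = e
  · rw [if_pos hc]; exact MeasurableSet.univ
  · rw [if_neg hc]; exact MeasurableSet.empty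

open Classical in
lemma measurable_stepF (hq : ∀ n w, 0 ≤ q n w) :
    ∀ n, Measurable (fun t => (B.stepF q n t).1) ∧ Measurable (fun t => (B.stepF q n t).2) := by
  intro n
  induction n with
  | zero =>
    constructor
    · exact (B.measurable_pickE q hq 0 B.uniqueV0.default)
    · have heq0 : (fun t => (B.stepF q 0 t).2)
          = fun t => t - B.cumQ q 0 (B.pickE q 0 B.uniqueV0.default t) := rfl
      rw [heq0]
      exact measurable_id.sub
        ((measurable_from_top (f := fun e => B.cumQ q 0 e)).comp
          (B.measurable_pickE q hq 0 B.uniqueV0.default))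
  | succ n ih =>
    obtain ⟨he, hs⟩ := ih
    have hfst : Measurable (fun t => (B.stepF q (n+1) t).1) := by
      apply measurable_to_countable'
      intro e'
      have hset : (fun t => (B.stepF q (n+1) t).1) ⁻¹' {e'}
          = ⋃ e : B.E n, ((fun t => (B.stepF q n t).1) ⁻¹' {e}) ∩
              ((fun t => (B.stepF q n t).2) ⁻¹' ((B.pickE q (n+1) (B.rng n e)) ⁻¹' {e'})) := by
        ext t
        simp only [Set.mem_preimage, Set.mem_iUnion, Set.mem_inter_iff, Set.mem_singleton_iff]
        constructor
        · intro h
          refine ⟨(B.stepF q n t).1, rfl, ?_⟩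
          exact h
        · rintro ⟨e, he1, he2⟩
          show B.pickE q (n+1) (B.rng n (B.stepF q n t).1) (B.stepF q n t).2 = e'
          rw [he1]
          exact he2
      rw [hset]
      refine MeasurableSet.iUnion (fun e => ?_)
      exact (he (MeasurableSet.singleton e)).inter
        (hs (B.measurable_pickE q hq (n+1) (B.rng n e) (MeasurableSet.singleton e')))
    refine ⟨hfst, ?_⟩
    have : (fun t => (B.stepF q (n+1) t).2)
        = fun t => (B.stepF q n t).2 - B.cumQ q (n+1) ((B.stepF q (n+1) t).1) := by
      funext t
      exact B.stepF_snd q (n+1) t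
    rw [this]
    exact hs.sub ((measurable_from_top (f := fun e => B.cumQ q (n+1) e)).comp hfst)

lemma measurableSpace_path_eq :
    (borel B.Path : MeasurableSpace B.Path)
      = (Subtype.instMeasurableSpace :
          MeasurableSpace {x : ∀ n, B.E n // ∀ n, B.rng n (x n) = B.src (n+1) (x (n+1))}) := by
  haveI hbs : BorelSpace {x : ∀ n, B.E n // ∀ n, B.rng n (x n) = B.src (n+1) (x (n+1))} :=
    Subtype.borelSpace {x : ∀ n, B.E n | ∀ n, B.rng n (x n) = B.src (n+1) (x (n+1))}
  have h := hbs.measurable_eq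
  exact h.symm

open Classical in
lemma measurable_pathOf (hq : ∀ n w, 0 ≤ q n w) : Measurable (B.pathOf q) := by
  have hpi : Measurable (fun t => (fun n => (B.stepF q n t).1 : ∀ n, B.E n)) :=
    measurable_pi_lambda _ (fun n => (B.measurable_stepF q hq n).1)
  have key : @Measurable ℝ B.Path _
      (Subtype.instMeasurableSpace :
        MeasurableSpace {x : ∀ n, B.E n // ∀ n, B.rng n (x n) = B.src (n+1) (x (n+1))})
      (B.pathOf q) := by
    exact Measurable.subtype_mk hpi
  have heq := B.measurableSpace_path_eq
  show @Measurable ℝ B.Path _ (borel B.Path) (B.pathOf q)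
  rw [heq]
  exact key

end Meas
end BratteliDiagram

namespace BratteliDiagram
section Mu
open Finset
variable (B : BratteliDiagram) (q : (n : ℕ) → B.V n → ℝ)

noncomputable def muB : Measure B.Path :=
  Measure.map (B.pathOf q) (volume.restrict (Set.Ico 0 (q 0 B.uniqueV0.default)))

open Classical in
lemma muB_cylinder (hq : ∀ n w, 0 ≤ q n w)
    (hrec : ∀ n v, q n v = ∑ e ∈ univ.filter (fun e => B.src n e = v), q (n+1) (B.rng n e))
    (x : B.Path) (n : ℕ) :
    B.muB q (B.cylinder x n) = ENNReal.ofReal (q n (B.vertexAt x n)) := by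
  rw [muB, Measure.map_apply (B.measurable_pathOf q hq) (B.measurableSet_cylinder x n),
    Measure.restrict_apply ((B.measurable_pathOf q hq) (B.measurableSet_cylinder x n)),
    B.preimage_cylinder q hq hrec x n, Real.volume_Ico]
  congr 1
  ring

open Classical in
lemma muB_univ (hq : ∀ n w, 0 ≤ q n w)
    (hrec : ∀ n v, q n v = ∑ e ∈ univ.filter (fun e => B.src n e = v), q (n+1) (B.rng n e)) :
    B.muB q Set.univ = ENNReal.ofReal (q 0 B.uniqueV0.default) := by
  have h := B.muB_cylinder q hq hrec B.basePath 0
  rw [B.cylinder_zero] at h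
  rw [h]
  haveI := B.uniqueV0
  have hv : B.vertexAt B.basePath 0 = B.uniqueV0.default := Subsingleton.elim _ _
  rw [hv]

open Classical in
lemma muB_finite (hq : ∀ n w, 0 ≤ q n w)
    (hrec : ∀ n v, q n v = ∑ e ∈ univ.filter (fun e => B.src n e = v), q (n+1) (B.rng n e)) :
    IsFiniteMeasure (B.muB q) := by
  constructor
  rw [B.muB_univ q hq hrec]
  exact ENNReal.ofReal_lt_top

open Classical in
lemma muB_invariant (hq : ∀ n w, 0 ≤ q n w)
    (hrec : ∀ n v, q n v = ∑ e ∈ univ.filter (fun e => B.src n e = v), q (n+1) (B.rng n e)) :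
    B.IsRInvariant (B.muB q) := by
  intro x y n h
  rw [B.muB_cylinder q hq hrec, B.muB_cylinder q hq hrec, h]

open Classical in
lemma muB_singleton_eq (hq : ∀ n w, 0 ≤ q n w)
    (hrec : ∀ n v, q n v = ∑ e ∈ univ.filter (fun e => B.src n e = v), q (n+1) (B.rng n e))
    (y : B.Path) :
    B.muB q {y} = ⨅ n, ENNReal.ofReal (q n (B.vertexAt y n)) := by
  set M := q 0 B.uniqueV0.default with hM
  rw [muB, Measure.map_apply (B.measurable_pathOf q hq) (B.measurableSet_singleton_path y),
    Measure.restrict_apply ((B.measurable_pathOf q hq) (B.measurableSet_singleton_path y))]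
  have h1 : (B.pathOf q) ⁻¹' {y} ∩ Set.Ico 0 M
      = ⋂ n, ((B.pathOf q) ⁻¹' (B.cylinder y n) ∩ Set.Ico 0 M) := by
    rw [B.singleton_eq_iInter y, Set.preimage_iInter, Set.iInter_inter]
  rw [h1]
  have hmeas : ∀ n : ℕ, NullMeasurableSet
      ((B.pathOf q) ⁻¹' (B.cylinder y n) ∩ Set.Ico 0 M) volume := by
    intro n
    exact (((B.measurable_pathOf q hq) (B.measurableSet_cylinder y n)).inter
      measurableSet_Ico).nullMeasurableSet
  have hanti : Antitone (fun n => (B.pathOf q) ⁻¹' (B.cylinder y n) ∩ Set.Ico 0 M) := by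
    intro m n hmn
    exact Set.inter_subset_inter (Set.preimage_mono (B.cylinder_antitone hmn)) subset_rfl
  have hfin : ∃ n : ℕ, volume ((B.pathOf q) ⁻¹' (B.cylinder y n) ∩ Set.Ico 0 M) ≠ ⊤ := by
    refine ⟨0, ?_⟩
    rw [B.preimage_cylinder q hq hrec y 0, Real.volume_Ico]
    exact ENNReal.ofReal_ne_top
  rw [Directed.measure_iInter hmeas hanti.directed_ge hfin]
  apply iInf_congr
  intro n
  rw [B.preimage_cylinder q hq hrec y n, Real.volume_Ico]
  congr 1
  ring

open Classical in
lemma q_path_antitone (hq : ∀ n w, 0 ≤ q n w)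
    (hrec : ∀ n v, q n v = ∑ e ∈ univ.filter (fun e => B.src n e = v), q (n+1) (B.rng n e))
    (y : B.Path) :
    Antitone (fun n => ENNReal.ofReal (q n (B.vertexAt y n))) := by
  apply antitone_nat_of_succ_le
  intro n
  apply ENNReal.ofReal_le_ofReal
  have hca := B.cumQ_add_le q hq hrec n (y.1 n)
  have hc0 := B.cumQ_nonneg q hq n (y.1 n)
  rw [B.vertexAt_succ y n, B.vertexAt_eq_src y n]
  linarith

open Classical in
lemma muB_singleton_tail (hq : ∀ n w, 0 ≤ q n w)
    (hrec : ∀ n v, q n v = ∑ e ∈ univ.filter (fun e => B.src n e = v), q (n+1) (B.rng n e))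
    (x y : B.Path) (hxy : B.TailEquiv x y) :
    B.muB q {y} = B.muB q {x} := by
  obtain ⟨N, hN⟩ := hxy
  rw [B.muB_singleton_eq q hq hrec, B.muB_singleton_eq q hq hrec]
  have hvertex : ∀ n, N ≤ n → q n (B.vertexAt y n) = q n (B.vertexAt x n) := by
    intro n hn
    have : B.vertexAt y n = B.vertexAt x n := by
      show B.src n (y.1 n) = B.src n (x.1 n)
      rw [hN n hn]
    rw [this]
  have key : ∀ u w : ℕ → ENNReal, Antitone u → Antitone w →
      (∀ n, N ≤ n → u n = w n) → (⨅ n, u n) ≤ ⨅ n, w n := by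
    intro u w hu hw h
    apply le_iInf
    intro m
    calc ⨅ n, u n ≤ u (m + N) := iInf_le _ _
      _ = w (m + N) := h _ (by omega)
      _ ≤ w m := hw (by omega)
  apply le_antisymm
  · exact key _ _ (B.q_path_antitone q hq hrec y) (B.q_path_antitone q hq hrec x)
      (fun n hn => by rw [hvertex n hn])
  · exact key _ _ (B.q_path_antitone q hq hrec x) (B.q_path_antitone q hq hrec y)
      (fun n hn => by rw [hvertex n hn])

open Classical in
lemma muB_atomless (hq : ∀ n w, 0 ≤ q n w)
    (hrec : ∀ n v, q n v = ∑ e ∈ univ.filter (fun e => B.src n e = v), q (n+1) (B.rng n e))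
    (hap : B.Aperiodic) (x : B.Path) : B.muB q {x} = 0 := by
  haveI := B.muB_finite q hq hrec
  set c := B.muB q {x} with hc
  by_contra hc0
  have hinf := hap x
  set emb := hinf.natEmbedding with hemb
  have hval : ∀ i : ℕ, B.muB q {(emb i : B.Path)} = c := by
    intro i
    exact B.muB_singleton_tail q hq hrec x (emb i) (emb i).2
  have hsum : ∀ K : ℕ, (K : ENNReal) * c ≤ B.muB q Set.univ := by
    intro K
    have hd : ((Finset.range K : Finset ℕ) : Set ℕ).PairwiseDisjoint
        (fun i => ({(emb i : B.Path)} : Set B.Path)) := by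
      intro i _ j _ hij
      show Disjoint ({(emb i : B.Path)} : Set B.Path) {(emb j : B.Path)}
      rw [Set.disjoint_singleton]
      intro h
      exact hij (emb.injective (Subtype.ext h))
    have hb := measure_biUnion_finset (μ := B.muB q) hd
      (fun i _ => B.measurableSet_singleton_path _)
    calc (K : ENNReal) * c = ∑ _i ∈ Finset.range K, c := by
          rw [Finset.sum_const, Finset.card_range, nsmul_eq_mul]
      _ = ∑ i ∈ Finset.range K, B.muB q {(emb i : B.Path)} := by
          apply Finset.sum_congr rfl
          intro i _
          rw [hval i]
      _ = B.muB q (⋃ i ∈ Finset.range K, {(emb i : B.Path)}) := hb.symm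
      _ ≤ B.muB q Set.univ := measure_mono (Set.subset_univ _)
  have hctop : c ≠ ⊤ := by
    have hle : c ≤ B.muB q Set.univ := measure_mono (Set.subset_univ _)
    exact ne_top_of_le_ne_top (measure_ne_top (B.muB q) Set.univ) hle
  have hrpos : 0 < c.toReal := ENNReal.toReal_pos hc0 hctop
  have hK : ∀ K : ℕ, (K : ℝ) * c.toReal ≤ (B.muB q Set.univ).toReal := by
    intro K
    have := ENNReal.toReal_mono (measure_ne_top (B.muB q) Set.univ) (hsum K)
    rw [ENNReal.toReal_mul] at this
    simpa using this
  obtain ⟨K, hKgt⟩ := exists_nat_gt ((B.muB q Set.univ).toReal / c.toReal)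
  have hKK := hK K
  rw [div_lt_iff₀ hrpos] at hKgt
  linarith

end Mu
end BratteliDiagram


open Finset


/-- Description of finite `R`-invariant measures on a Bratteli diagram
with aperiodic tail equivalence relation, via the sequences of vectors of cylinder
measures: (1) such a measure gives vectors in the cones `C_n^∞` satisfying
`F_n^T p^{(n+1)} = p^{(n)}`; (2) conversely any nonnegative sequence satisfying the
recursion comes from a (non-atomic) finite invariant Borel measure; (3) the measure is a
probability measure iff `Σ_w h^{(1)}_w p^{(1)}_w = 1`, in which case this holds at every
level. -/
theorem invariantMeasures_of_brattelidiagram (B : BratteliDiagram) (hap : B.Aperiodic) :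
    (∀ μ : Measure B.Path, IsFiniteMeasure μ → B.IsRInvariant μ →
      ∀ p : (n : ℕ) → B.V n → ℝ,
        (∀ (n : ℕ) (x : B.Path), p n (B.vertexAt x n) = (μ (B.cylinder x n)).toReal) →
        (∀ n, 1 ≤ n → p n ∈ B.coneInf n) ∧
        (∀ n, 1 ≤ n → B.transAction n (p (n + 1)) = p n)) ∧
    (∀ p : (n : ℕ) → B.V n → ℝ, (∀ n w, 0 ≤ p n w) →
      (∀ n, 1 ≤ n → B.transAction n (p (n + 1)) = p n) →
      ∃ μ : Measure B.Path, IsFiniteMeasure μ ∧ (∀ x : B.Path, μ {x} = 0) ∧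
        B.IsRInvariant μ ∧
        ∀ (n : ℕ) (x : B.Path), 1 ≤ n →
          (μ (B.cylinder x n)).toReal = p n (B.vertexAt x n)) ∧
    (∀ μ : Measure B.Path, IsFiniteMeasure μ → B.IsRInvariant μ →
      ∀ p : (n : ℕ) → B.V n → ℝ,
        (∀ (n : ℕ) (x : B.Path), p n (B.vertexAt x n) = (μ (B.cylinder x n)).toReal) →
        ((IsProbabilityMeasure μ ↔ ∑ w : B.V 1, (B.height 1 w : ℝ) * p 1 w = 1) ∧
         (IsProbabilityMeasure μ →
            ∀ n, 1 ≤ n → ∑ w : B.V n, (B.height n w : ℝ) * p n w = 1))) := by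
  classical
  refine ⟨?_, ?_, ?_⟩
  · -- Part 1
    intro μ hfin hinv p hp
    haveI := hfin
    have hrec' : ∀ n, B.transAction n (p (n+1)) = p n := fun n => B.key_rec' μ p hp n
    constructor
    · intro n _ k _
      exact ⟨p (n + k), fun v => B.p_nonneg μ p hp (n+k) v, B.push_eq p hrec' n k⟩
    · intro n _
      exact hrec' n
  · -- Part 2
    intro p hp0 hprec
    set M : ℝ := ∑ e : B.E 0, p 1 (B.rng 0 e) with hM
    set q : (n : ℕ) → B.V n → ℝ := fun n => match n with
      | 0 => fun _ => M
      | (k+1) => p (k+1) with hq'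
    have hq : ∀ n w, 0 ≤ q n w := by
      intro n w
      cases n with
      | zero => exact Finset.sum_nonneg (fun e _ => hp0 1 _)
      | succ k => exact hp0 (k+1) w
    have hrec : ∀ n v, q n v
        = ∑ e ∈ Finset.univ.filter (fun e => B.src n e = v), q (n+1) (B.rng n e) := by
      intro n v
      cases n with
      | zero =>
        haveI := B.uniqueV0
        show M = _
        simp only [eq_iff_true_of_subsingleton, Finset.filter_true]
        rfl
      | succ k =>
        have h := hprec (k+1) (by omega)
        have h2 := B.transAction_eq_sum (k+1) (p (k+2)) v
        calc q (k+1) v = p (k+1) v := rfl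
          _ = B.transAction (k+1) (p (k+2)) v := by rw [h]
          _ = ∑ e ∈ Finset.univ.filter (fun e => B.src (k+1) e = v),
                p (k+2) (B.rng (k+1) e) := h2
          _ = ∑ e ∈ Finset.univ.filter (fun e => B.src (k+1) e = v),
                q (k+2) (B.rng (k+1) e) := rfl
    haveI hFin := B.muB_finite q hq hrec
    refine ⟨B.muB q, hFin, fun x => B.muB_atomless q hq hrec hap x,
      B.muB_invariant q hq hrec, ?_⟩
    intro n x hn
    obtain ⟨m, rfl⟩ : ∃ m, n = m + 1 := ⟨n - 1, by omega⟩
    rw [B.muB_cylinder q hq hrec x (m+1), ENNReal.toReal_ofReal (hq (m+1) _)]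
  · -- Part 3
    intro μ hfin hinv p hp
    haveI := hfin
    have hmass := B.mass_eq μ p hp
    constructor
    · constructor
      · intro hprob
        rw [hmass 1, hprob.measure_univ]
        simp
      · intro h1
        rw [hmass 1] at h1
        exact ⟨(ENNReal.toReal_eq_one_iff _).mp h1⟩
    · intro hprob n _
      rw [hmass n, hprob.measure_univ]
      simp
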